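/- Let k be a field, L a finite-dimensional Lie algebra over k, F = k(t) the field of rational functions, and regard F ⊗_k L as a Lie algebra over F. Let H be an F-Lie subalgebra of F ⊗_k L, let M = H ∩ (k[t] ⊗_k L) (intersection inside F ⊗_k L via the canonical embedding), and let S = ε₀(M) ⊆ L, where ε₀ : k[t] ⊗_k L → L is evaluation of polynomial coefficients at 0. Then: (1) S is a Lie subalgebra of L with dim_k S = dim_F H; (2) dim_k ⁅S, S⁆ ≤ dim_F ⁅H, H⁆, hence dim_k S − dim_k ⁅S,S⁆ ≥ dim_F H − dim_F ⁅H,H⁆; and (3) dim_k z(S) ≥ dim_F z(H), where z denotes the centre, z(S) = {x ∈ S : ⁅x, s⁆ = 0 for all s ∈ S} and z(H) = {x ∈ H : ⁅x, h⁆ = 0 for all h ∈ H}. -/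

import Mathlib

open scoped TensorProduct

/-- Evaluation at `0` of polynomial coefficients: the `k`-linear map
`k[t] ⊗[k] L → L` sending `f ⊗ x` to `f(0) • x`. -/
noncomputable def lieEvalZeroMap (k L : Type*) [Field k] [AddCommGroup L] [Module k L] :
    Polynomial k ⊗[k] L →ₗ[k] L :=
  TensorProduct.lift ((LinearMap.lsmul k L).comp (Polynomial.lcoeff k 0))

/-- The canonical `k`-linear embedding `k[t] ⊗[k] L → k(t) ⊗[k] L` induced by the
inclusion `k[t] → k(t)`. -/
noncomputable def liePolyToRatFuncMap (k L : Type*) [Field k] [AddCommGroup L] [Module k L] :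
    Polynomial k ⊗[k] L →ₗ[k] RatFunc k ⊗[k] L :=
  LinearMap.rTensor L
    ((Algebra.linearMap (Polynomial k) (RatFunc k)).restrictScalars k)

namespace LieSpecAux

variable {k L : Type*} [Field k] [AddCommGroup L] [Module k L]

theorem eps_tmul (f : Polynomial k) (x : L) :
    lieEvalZeroMap k L (f ⊗ₜ x) = f.coeff 0 • x := rfl

theorem iota_tmul (f : Polynomial k) (x : L) :
    liePolyToRatFuncMap k L (f ⊗ₜ x) = (algebraMap (Polynomial k) (RatFunc k) f) ⊗ₜ x := rfl

theorem iota_smul (f : Polynomial k) (m : Polynomial k ⊗[k] L) :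
    liePolyToRatFuncMap k L (f • m)
      = (algebraMap (Polynomial k) (RatFunc k) f) • liePolyToRatFuncMap k L m := by
  induction m using TensorProduct.induction_on with
  | zero => simp
  | tmul g x =>
      rw [TensorProduct.smul_tmul', iota_tmul, iota_tmul, TensorProduct.smul_tmul',
        smul_eq_mul, smul_eq_mul, map_mul]
  | add a b ha hb => rw [smul_add, map_add, ha, hb, map_add, smul_add]

theorem eps_smul (f : Polynomial k) (m : Polynomial k ⊗[k] L) :
    lieEvalZeroMap k L (f • m) = f.coeff 0 • lieEvalZeroMap k L m := by
  induction m using TensorProduct.induction_on with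
  | zero => simp
  | tmul g x =>
      rw [TensorProduct.smul_tmul', eps_tmul, eps_tmul, smul_eq_mul, Polynomial.mul_coeff_zero,
        mul_smul]
  | add a b ha hb => rw [smul_add, map_add, ha, hb, map_add, smul_add]

theorem iota_injective : Function.Injective (liePolyToRatFuncMap k L) := by
  apply Module.Flat.rTensor_preserves_injective_linearMap
  exact fun a b h => IsFractionRing.injective (Polynomial k) (RatFunc k) h


section Lie

variable {k L : Type*} [Field k] [LieRing L] [LieAlgebra k L]

theorem iota_bracket (a b : Polynomial k ⊗[k] L) :
    liePolyToRatFuncMap k L ⁅a, b⁆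
      = ⁅liePolyToRatFuncMap k L a, liePolyToRatFuncMap k L b⁆ := by
  induction a using TensorProduct.induction_on with
  | zero =>
      rw [zero_lie b, map_zero]
      exact (zero_lie _).symm
  | add a₁ a₂ h₁ h₂ => rw [add_lie a₁ a₂ b, map_add, h₁, h₂, map_add, add_lie]
  | tmul f x =>
      induction b using TensorProduct.induction_on with
      | zero =>
          rw [lie_zero (f ⊗ₜ[k] x), map_zero]
          exact (lie_zero _).symm
      | add b₁ b₂ h₁ h₂ => rw [lie_add (f ⊗ₜ[k] x) b₁ b₂, map_add, h₁, h₂, map_add, lie_add]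
      | tmul g y =>
          rw [LieAlgebra.ExtendScalars.bracket_tmul k _ _ _ f g x y, iota_tmul, iota_tmul, iota_tmul,
            LieAlgebra.ExtendScalars.bracket_tmul, map_mul]

theorem eps_bracket (a b : Polynomial k ⊗[k] L) :
    lieEvalZeroMap k L ⁅a, b⁆ = ⁅lieEvalZeroMap k L a, lieEvalZeroMap k L b⁆ := by
  induction a using TensorProduct.induction_on with
  | zero =>
      rw [zero_lie b, map_zero]
      exact (zero_lie _).symm
  | add a₁ a₂ h₁ h₂ => rw [add_lie a₁ a₂ b, map_add, h₁, h₂, map_add, add_lie]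
  | tmul f x =>
      induction b using TensorProduct.induction_on with
      | zero =>
          rw [lie_zero (f ⊗ₜ[k] x), map_zero]
          exact (lie_zero _).symm
      | add b₁ b₂ h₁ h₂ => rw [lie_add (f ⊗ₜ[k] x) b₁ b₂, map_add, h₁, h₂, map_add, lie_add]
      | tmul g y =>
          rw [LieAlgebra.ExtendScalars.bracket_tmul k _ _ _ f g x y, eps_tmul, eps_tmul, eps_tmul,
            Polynomial.mul_coeff_zero, smul_lie, lie_smul, mul_smul]

end Lie

section Denom

variable {k L : Type*} [Field k] [AddCommGroup L] [Module k L]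

theorem exists_denom (v : RatFunc k ⊗[k] L) :
    ∃ (f : Polynomial k) (m : Polynomial k ⊗[k] L), f ≠ 0 ∧
      (algebraMap (Polynomial k) (RatFunc k) f) • v = liePolyToRatFuncMap k L m := by
  induction v using TensorProduct.induction_on with
  | zero => exact ⟨1, 0, one_ne_zero, by simp⟩
  | tmul c x =>
      refine ⟨c.denom, c.num ⊗ₜ x, c.denom_ne_zero, ?_⟩
      have hd : (algebraMap (Polynomial k) (RatFunc k)) c.denom ≠ 0 := fun h =>
        c.denom_ne_zero ((map_eq_zero_iff _
          (IsFractionRing.injective (Polynomial k) (RatFunc k))).mp h)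
      rw [iota_tmul, TensorProduct.smul_tmul', smul_eq_mul]
      congr 1
      exact (mul_comm _ _).trans ((div_eq_iff hd).mp (RatFunc.num_div_denom c)).symm
  | add v₁ v₂ h₁ h₂ =>
      obtain ⟨f₁, m₁, hf₁, e₁⟩ := h₁
      obtain ⟨f₂, m₂, hf₂, e₂⟩ := h₂
      refine ⟨f₁ * f₂, f₂ • m₁ + f₁ • m₂, mul_ne_zero hf₁ hf₂, ?_⟩
      rw [map_add, iota_smul, iota_smul, ← e₁, ← e₂, map_mul, smul_add, smul_smul, smul_smul,
        mul_comm ((algebraMap (Polynomial k) (RatFunc k)) f₂)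
          ((algebraMap (Polynomial k) (RatFunc k)) f₁)]

end Denom


section Main

variable {k L : Type*} [Field k] [LieRing L] [LieAlgebra k L] [Module.Finite k L]

variable (k L) in
/-- The lattice `ι⁻¹ W` inside `k[t] ⊗ L`. -/
def latt (W : Submodule (RatFunc k) (RatFunc k ⊗[k] L)) :
    Submodule (Polynomial k) (Polynomial k ⊗[k] L) where
  carrier := {m | liePolyToRatFuncMap k L m ∈ W}
  zero_mem' := by simp only [Set.mem_setOf_eq, map_zero]; exact W.zero_mem
  add_mem' := by
    intro a b ha hb
    simp only [Set.mem_setOf_eq, map_add] at *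
    exact W.add_mem ha hb
  smul_mem' := by
    intro f m hm
    simp only [Set.mem_setOf_eq] at *
    rw [iota_smul]
    exact W.smul_mem _ hm

omit [Module.Finite k L] in
theorem mem_latt {W : Submodule (RatFunc k) (RatFunc k ⊗[k] L)} {m : Polynomial k ⊗[k] L} :
    m ∈ latt k L W ↔ liePolyToRatFuncMap k L m ∈ W := Iff.rfl

theorem eps_eq_zero {m : Polynomial k ⊗[k] L} (h : lieEvalZeroMap k L m = 0) :
    ∃ m', m = (Polynomial.X : Polynomial k) • m' := by
  classical
  set b := Module.finBasis k L with hb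
  set bL := b.baseChange (Polynomial k) with hbL
  have hm : m = ∑ i, bL.repr m i • bL i := (bL.sum_repr m).symm
  have heps : lieEvalZeroMap k L m = ∑ i, (bL.repr m i).coeff 0 • b i := by
    conv_lhs => rw [hm]
    rw [map_sum]
    refine Finset.sum_congr rfl fun i _ => ?_
    rw [eps_smul, Module.Basis.baseChange_apply, eps_tmul, Polynomial.coeff_one, if_pos rfl, one_smul]
  rw [h] at heps
  have hcoeff : ∀ i, (bL.repr m i).coeff 0 = 0 := by
    have := Fintype.linearIndependent_iff.mp b.linearIndependent
      (fun i => (bL.repr m i).coeff 0) heps.symm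
    exact this
  have hdvd : ∀ i, ∃ q : Polynomial k, bL.repr m i = Polynomial.X * q := by
    intro i
    exact Polynomial.X_dvd_iff.mpr (hcoeff i)
  choose q hq using hdvd
  refine ⟨∑ i, q i • bL i, ?_⟩
  rw [Finset.smul_sum]
  conv_lhs => rw [hm]
  refine Finset.sum_congr rfl fun i _ => ?_
  rw [hq i, mul_smul]

set_option synthInstance.maxHeartbeats 1000000 in
set_option maxHeartbeats 2000000 in
theorem latt_finrank (W : Submodule (RatFunc k) (RatFunc k ⊗[k] L)) :
    Module.finrank k
        (Submodule.map (lieEvalZeroMap k L) ((latt k L W).restrictScalars k))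
      = Module.finrank (RatFunc k) W := by
  classical
  set b := Module.finBasis k L with hb
  set bL := b.baseChange (Polynomial k) with hbL
  set N := latt k L W with hN
  obtain ⟨n, bN⟩ := N.basisOfPid bL
  -- the images in k(t) ⊗ L are linearly independent over k(t)
  have hWind : LinearIndependent (RatFunc k)
      (fun i : Fin n => liePolyToRatFuncMap k L (bN i : Polynomial k ⊗[k] L)) := by
    rw [Fintype.linearIndependent_iff]
    intro g hg
    set d : Polynomial k := ∏ j, (g j).denom with hd
    have hdne : d ≠ 0 := Finset.prod_ne_zero_iff.mpr fun j _ => (g j).denom_ne_zero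
    have hclear : ∀ i, ∃ p : Polynomial k,
        algebraMap (Polynomial k) (RatFunc k) d * g i
          = algebraMap (Polynomial k) (RatFunc k) p := by
      intro i
      refine ⟨(∏ j ∈ Finset.univ.erase i, (g j).denom) * (g i).num, ?_⟩
      have hdi : d = (g i).denom * ∏ j ∈ Finset.univ.erase i, (g j).denom :=
        (Finset.mul_prod_erase Finset.univ _ (Finset.mem_univ i)).symm
      have hden : (algebraMap (Polynomial k) (RatFunc k)) (g i).denom ≠ 0 := fun hh =>
        (g i).denom_ne_zero ((map_eq_zero_iff _
          (IsFractionRing.injective (Polynomial k) (RatFunc k))).mp hh)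
      rw [hdi, map_mul, map_mul, mul_assoc, mul_comm ((algebraMap (Polynomial k) (RatFunc k)) (g i).denom),
        mul_assoc]
      congr 1
      exact ((div_eq_iff hden).mp (RatFunc.num_div_denom (g i))).symm
    choose p hp using hclear
    have hsum : liePolyToRatFuncMap k L (∑ i, p i • (bN i : Polynomial k ⊗[k] L)) = 0 := by
      rw [map_sum]
      have : ∀ i, liePolyToRatFuncMap k L (p i • (bN i : Polynomial k ⊗[k] L))
          = (algebraMap (Polynomial k) (RatFunc k) d * g i)
              • liePolyToRatFuncMap k L (bN i : Polynomial k ⊗[k] L) := by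
        intro i; rw [iota_smul, hp i]
      rw [Finset.sum_congr rfl fun i _ => this i]
      have : ∑ i, (algebraMap (Polynomial k) (RatFunc k) d * g i)
          • liePolyToRatFuncMap k L (bN i : Polynomial k ⊗[k] L)
          = algebraMap (Polynomial k) (RatFunc k) d
              • ∑ i, g i • liePolyToRatFuncMap k L (bN i : Polynomial k ⊗[k] L) := by
        rw [Finset.smul_sum]
        exact Finset.sum_congr rfl fun i _ => (mul_smul _ _ _)
      rw [this, hg, smul_zero]
    have hzero : (∑ i, p i • (bN i : Polynomial k ⊗[k] L)) = 0 :=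
      iota_injective (by rw [hsum, map_zero])
    have hzeroN : (∑ i, p i • bN i) = (0 : N) := by
      have hc : ((∑ i, p i • bN i : N) : Polynomial k ⊗[k] L)
          = ∑ i, p i • (bN i : Polynomial k ⊗[k] L) := by
        have := congrArg N.subtype (rfl : (∑ i, p i • bN i : N) = ∑ i, p i • bN i)
        simpa [map_sum] using this
      exact Subtype.ext (hc.trans hzero)
    have hp0 : ∀ i, p i = 0 := by
      intro j
      have hre := bN.repr_sum_self p
      rw [hzeroN] at hre
      simpa using congrFun hre.symm j
    intro i
    have := hp i
    rw [hp0 i, map_zero] at this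
    have hdF : (algebraMap (Polynomial k) (RatFunc k)) d ≠ 0 := fun hh =>
      hdne ((map_eq_zero_iff _ (IsFractionRing.injective (Polynomial k) (RatFunc k))).mp hh)
    exact (mul_eq_zero.mp this).resolve_left hdF
  -- the images span W
  have hWspan : Submodule.span (RatFunc k)
      (Set.range fun i : Fin n => liePolyToRatFuncMap k L (bN i : Polynomial k ⊗[k] L)) = W := by
    apply le_antisymm
    · rw [Submodule.span_le]
      rintro _ ⟨i, rfl⟩
      exact (bN i).2
    · intro w hw
      obtain ⟨f, m, hf, e⟩ := exists_denom w
      have hmN : m ∈ N := by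
        rw [mem_latt, ← e]
        exact W.smul_mem _ hw
      have hfF : (algebraMap (Polynomial k) (RatFunc k)) f ≠ 0 := fun hh =>
        hf ((map_eq_zero_iff _ (IsFractionRing.injective (Polynomial k) (RatFunc k))).mp hh)
      have hmspan : liePolyToRatFuncMap k L m ∈ Submodule.span (RatFunc k)
          (Set.range fun i : Fin n => liePolyToRatFuncMap k L (bN i : Polynomial k ⊗[k] L)) := by
        have hrepr : (⟨m, hmN⟩ : N) = ∑ i, bN.repr ⟨m, hmN⟩ i • bN i :=
          (bN.sum_repr ⟨m, hmN⟩).symm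
        have hm' : m = ∑ i, bN.repr ⟨m, hmN⟩ i • (bN i : Polynomial k ⊗[k] L) := by
          have := congrArg (N.subtype) hrepr
          simpa only [map_sum, map_smul, Submodule.subtype_apply, Submodule.coe_smul] using this
        rw [hm', map_sum]
        refine Submodule.sum_mem _ fun i _ => ?_
        rw [iota_smul]
        exact Submodule.smul_mem _ _ (Submodule.subset_span ⟨i, rfl⟩)
      have hw' : w = (algebraMap (Polynomial k) (RatFunc k) f)⁻¹ • liePolyToRatFuncMap k L m := by
        rw [← e, smul_smul, inv_mul_cancel₀ hfF, one_smul]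
      rw [hw']
      exact Submodule.smul_mem _ _ hmspan
  have h1 : Module.finrank (RatFunc k) W = n := by
    rw [← hWspan, finrank_span_eq_card hWind, Fintype.card_fin]
  -- the specialisations at 0 are linearly independent over k
  have hSind : LinearIndependent k
      (fun i : Fin n => lieEvalZeroMap k L (bN i : Polynomial k ⊗[k] L)) := by
    rw [Fintype.linearIndependent_iff]
    intro g hg
    set mN : N := ∑ i, Polynomial.C (g i) • bN i with hmN
    have hmΛ : (mN : Polynomial k ⊗[k] L)
        = ∑ i, Polynomial.C (g i) • (bN i : Polynomial k ⊗[k] L) := by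
      have := congrArg (N.subtype) hmN
      simpa [map_sum] using this
    have heps : lieEvalZeroMap k L (mN : Polynomial k ⊗[k] L) = 0 := by
      rw [hmΛ, map_sum]
      have : ∀ i, lieEvalZeroMap k L (Polynomial.C (g i) • (bN i : Polynomial k ⊗[k] L))
          = g i • lieEvalZeroMap k L (bN i : Polynomial k ⊗[k] L) := by
        intro i; rw [eps_smul, Polynomial.coeff_C_zero]
      rw [Finset.sum_congr rfl fun i _ => this i, hg]
    obtain ⟨m', hm'⟩ := eps_eq_zero heps
    have hXF : (algebraMap (Polynomial k) (RatFunc k)) Polynomial.X ≠ 0 := fun hh =>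
      Polynomial.X_ne_zero ((map_eq_zero_iff _
        (IsFractionRing.injective (Polynomial k) (RatFunc k))).mp hh)
    have hm'N : m' ∈ N := by
      rw [mem_latt]
      have e1 : liePolyToRatFuncMap k L (mN : Polynomial k ⊗[k] L)
          = algebraMap (Polynomial k) (RatFunc k) Polynomial.X • liePolyToRatFuncMap k L m' := by
        rw [hm', iota_smul]
      have e2 : liePolyToRatFuncMap k L m'
          = (algebraMap (Polynomial k) (RatFunc k) Polynomial.X)⁻¹
              • liePolyToRatFuncMap k L (mN : Polynomial k ⊗[k] L) := by
        rw [e1, smul_smul, inv_mul_cancel₀ hXF, one_smul]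
      rw [e2]
      exact W.smul_mem _ (mN.2)
    have hsub : mN = (Polynomial.X : Polynomial k) • (⟨m', hm'N⟩ : N) := by
      apply Subtype.ext
      rw [hm']
      rfl
    have hrepr : ∀ i, Polynomial.C (g i) = Polynomial.X * bN.repr ⟨m', hm'N⟩ i := by
      intro i
      have h1' : bN.repr mN i = Polynomial.C (g i) := by
        rw [hmN, Module.Basis.repr_sum_self]
      have h2' : bN.repr mN i = Polynomial.X * bN.repr ⟨m', hm'N⟩ i := by
        rw [hsub, map_smul]
        rfl
      rw [← h1', h2']
    intro i
    have := congrArg (fun p => Polynomial.coeff p 0) (hrepr i)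
    simpa [Polynomial.mul_coeff_zero] using this
  -- the specialisations span the image
  have hSspan : Submodule.span k
      (Set.range fun i : Fin n => lieEvalZeroMap k L (bN i : Polynomial k ⊗[k] L))
      = Submodule.map (lieEvalZeroMap k L) ((latt k L W).restrictScalars k) := by
    apply le_antisymm
    · rw [Submodule.span_le]
      rintro _ ⟨i, rfl⟩
      exact ⟨bN i, (bN i).2, rfl⟩
    · rintro _ ⟨m, hm, rfl⟩
      have hrepr : (⟨m, hm⟩ : N) = ∑ i, bN.repr ⟨m, hm⟩ i • bN i :=
        (bN.sum_repr ⟨m, hm⟩).symm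
      have hm' : m = ∑ i, bN.repr ⟨m, hm⟩ i • (bN i : Polynomial k ⊗[k] L) := by
        have := congrArg (N.subtype) hrepr
        simpa only [map_sum, map_smul, Submodule.subtype_apply, Submodule.coe_smul] using this
      rw [hm', map_sum]
      refine Submodule.sum_mem _ fun i _ => ?_
      rw [eps_smul]
      exact Submodule.smul_mem _ _ (Submodule.subset_span ⟨i, rfl⟩)
  rw [h1, ← hSspan, finrank_span_eq_card hSind, Fintype.card_fin]

end Main

end LieSpecAux

open LieSpecAux in
set_option synthInstance.maxHeartbeats 1000000 in
set_option maxHeartbeats 2000000 in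
/-- Specialisation of Lie subalgebras: for an `F = k(t)`-Lie subalgebra `H` of `F ⊗[k] L`,
the specialisation at `t = 0` of `H ∩ (k[t] ⊗[k] L)` is a Lie subalgebra `S` of `L` with
`dim_k S = dim_F H`, `dim_k ⁅S,S⁆ ≤ dim_F ⁅H,H⁆` (hence
`dim_k S - dim_k ⁅S,S⁆ ≥ dim_F H - dim_F ⁅H,H⁆`), and `dim_k z(S) ≥ dim_F z(H)`. -/
theorem lie_specialization_subalgebra
    (k : Type*) [Field k] (L : Type*) [LieRing L] [LieAlgebra k L] [Module.Finite k L]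
    (H : LieSubalgebra (RatFunc k) (RatFunc k ⊗[k] L))
    (S : Set L)
    (hS : S = {x : L | ∃ m : Polynomial k ⊗[k] L,
      liePolyToRatFuncMap k L m ∈ H ∧ lieEvalZeroMap k L m = x})
    (brS : Set L) (hbrS : brS = {z : L | ∃ x ∈ S, ∃ y ∈ S, z = ⁅x, y⁆})
    (brH : Set (RatFunc k ⊗[k] L))
    (hbrH : brH = {z : RatFunc k ⊗[k] L |
      ∃ x ∈ (H : Set (RatFunc k ⊗[k] L)), ∃ y ∈ (H : Set (RatFunc k ⊗[k] L)), z = ⁅x, y⁆})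
    (zS : Set L) (hzS : zS = {x ∈ S | ∀ s ∈ S, ⁅x, s⁆ = 0})
    (zH : Set (RatFunc k ⊗[k] L))
    (hzH : zH = {x ∈ (H : Set (RatFunc k ⊗[k] L)) |
      ∀ h ∈ (H : Set (RatFunc k ⊗[k] L)), ⁅x, h⁆ = 0}) :
    (∃ S' : LieSubalgebra k L, (S' : Set L) = S ∧
        Module.finrank k S' = Module.finrank (RatFunc k) H) ∧
    Module.finrank k (Submodule.span k brS) ≤
      Module.finrank (RatFunc k) (Submodule.span (RatFunc k) brH) ∧
    Module.finrank (RatFunc k) H -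
        Module.finrank (RatFunc k) (Submodule.span (RatFunc k) brH) ≤
      Module.finrank k (Submodule.span k S) -
        Module.finrank k (Submodule.span k brS) ∧
    Module.finrank (RatFunc k) (Submodule.span (RatFunc k) zH) ≤
      Module.finrank k (Submodule.span k zS) := by
  classical
  set Smap : Submodule k L :=
    Submodule.map (lieEvalZeroMap k L) ((latt k L (H : Submodule (RatFunc k) (RatFunc k ⊗[k] L))).restrictScalars k) with hSmap
  have hSset : S = (Smap : Set L) := by
    rw [hS]
    ext x
    constructor
    · rintro ⟨m, hm, rfl⟩
      exact ⟨m, (LieSubalgebra.mem_toSubmodule H).mpr hm, rfl⟩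
    · rintro ⟨m, hm, rfl⟩
      exact ⟨m, (LieSubalgebra.mem_toSubmodule H).mp hm, rfl⟩
  -- part 1
  have part1 : ∃ S' : LieSubalgebra k L, (S' : Set L) = S ∧
      Module.finrank k S' = Module.finrank (RatFunc k) H := by
    refine ⟨{ Smap with lie_mem' := ?_ }, ?_, ?_⟩
    · rintro x y ⟨m, hm, rfl⟩ ⟨m', hm', rfl⟩
      refine ⟨⁅m, m'⁆, ?_, eps_bracket m m'⟩
      have : liePolyToRatFuncMap k L ⁅m, m'⁆ ∈ H := by
        rw [iota_bracket]
        exact H.lie_mem ((LieSubalgebra.mem_toSubmodule H).mp hm)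
          ((LieSubalgebra.mem_toSubmodule H).mp hm')
      exact (LieSubalgebra.mem_toSubmodule H).mpr this
    · rw [hSset]; rfl
    · exact latt_finrank (H : Submodule (RatFunc k) (RatFunc k ⊗[k] L))
  -- part 2
  have part2 : Module.finrank k (Submodule.span k brS) ≤
      Module.finrank (RatFunc k) (Submodule.span (RatFunc k) brH) := by
    have hle : Submodule.span k brS ≤ Submodule.map (lieEvalZeroMap k L)
        ((latt k L (Submodule.span (RatFunc k) brH)).restrictScalars k) := by
      rw [Submodule.span_le]
      intro z hz
      rw [hbrS] at hz
      obtain ⟨x, hx, y, hy, rfl⟩ := hz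
      rw [hS] at hx hy
      obtain ⟨m, hmH, rfl⟩ := hx
      obtain ⟨m', hm'H, rfl⟩ := hy
      refine ⟨⁅m, m'⁆, ?_, eps_bracket m m'⟩
      have : liePolyToRatFuncMap k L ⁅m, m'⁆ ∈ Submodule.span (RatFunc k) brH := by
        rw [iota_bracket]
        refine Submodule.subset_span ?_
        rw [hbrH]
        exact ⟨_, hmH, _, hm'H, rfl⟩
      exact this
    calc Module.finrank k (Submodule.span k brS)
        ≤ Module.finrank k (Submodule.map (lieEvalZeroMap k L)
            ((latt k L (Submodule.span (RatFunc k) brH)).restrictScalars k)) :=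
          Submodule.finrank_mono hle
      _ = Module.finrank (RatFunc k) (Submodule.span (RatFunc k) brH) :=
          latt_finrank _
  refine ⟨part1, part2, ?_, ?_⟩
  · -- part 3
    have hspanS : Submodule.span k S = Smap := by rw [hSset, Submodule.span_eq]
    have hrk : Module.finrank k (Submodule.span k S) = Module.finrank (RatFunc k) H := by
      rw [hspanS, hSmap]
      exact latt_finrank (H : Submodule (RatFunc k) (RatFunc k ⊗[k] L))
    rw [hrk]
    exact Nat.sub_le_sub_left part2 _
  · -- part 4
    set Z : Submodule (RatFunc k) (RatFunc k ⊗[k] L) :=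
      { carrier := {x | x ∈ H ∧ ∀ h ∈ H, ⁅x, h⁆ = 0}
        zero_mem' := ⟨H.zero_mem, fun h _ => zero_lie h⟩
        add_mem' := by
          rintro a b ⟨ha, ha'⟩ ⟨hb, hb'⟩
          exact ⟨H.add_mem ha hb, fun h hh => by rw [add_lie, ha' h hh, hb' h hh, add_zero]⟩
        smul_mem' := by
          rintro c x ⟨hx, hx'⟩
          exact ⟨H.smul_mem c hx, fun h hh => by rw [smul_lie, hx' h hh, smul_zero]⟩ } with hZ
    have hzHZ : Submodule.span (RatFunc k) zH = Z := by
      apply le_antisymm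
      · rw [Submodule.span_le]
        intro x hx
        rw [hzH] at hx
        exact hx
      · intro x hx
        refine Submodule.subset_span ?_
        rw [hzH]
        exact hx
    have hle : Submodule.map (lieEvalZeroMap k L) ((latt k L Z).restrictScalars k)
        ≤ Submodule.span k zS := by
      rintro _ ⟨m, hm, rfl⟩
      refine Submodule.subset_span ?_
      rw [hzS]
      have hmZ : liePolyToRatFuncMap k L m ∈ Z := hm
      refine ⟨?_, ?_⟩
      · rw [hS]
        exact ⟨m, hmZ.1, rfl⟩
      · intro s hs
        rw [hS] at hs
        obtain ⟨m', hm', rfl⟩ := hs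
        have hbr0 : ⁅liePolyToRatFuncMap k L m, liePolyToRatFuncMap k L m'⁆ = 0 :=
          hmZ.2 _ hm'
        have : ⁅m, m'⁆ = 0 := by
          apply iota_injective
          rw [iota_bracket, hbr0, map_zero]
        rw [← eps_bracket, this, map_zero]
    calc Module.finrank (RatFunc k) (Submodule.span (RatFunc k) zH)
        = Module.finrank (RatFunc k) Z := by rw [hzHZ]
      _ = Module.finrank k (Submodule.map (lieEvalZeroMap k L)
            ((latt k L Z).restrictScalars k)) := (latt_finrank Z).symm
      _ ≤ Module.finrank k (Submodule.span k zS) := Submodule.finrank_mono hle
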